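/- Let V : [0,∞) → [0,∞) be a differentiable function satisfying V'(t) ≤ -η_1 V(t) - η_2 V(t)^{(1+h)/2} + η_3 for all t ≥ 0, where η_1 > 0, η_2 > 0, η_3 > 0, and 0 < h < 1. Then for any κ ∈ (0,1), there exists a finite time T ≥ 0 such that for all t ≥ T, V(t) ≤ min{ 2η_3/((1-κ)η_1) , 2 (η_3/((1-κ)η_2))^{2/(1+h)} } / 2, i.e., V(t) ≤ min{ η_3/((1-κ)η_1) , (η_3/((1-κ)η_2))^{2/(1+h)} }. -/

import Mathlib

/-- If f is differentiable, f T ≤ B, and deriv f < 0 wherever f > B past T,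
then f stays ≤ B. -/
lemma stay_below (f : ℝ → ℝ) (hf : Differentiable ℝ f) (B T : ℝ)
    (hT : f T ≤ B)
    (hd : ∀ u, T ≤ u → B < f u → deriv f u < 0) :
    ∀ t ≥ T, f t ≤ B := by
  intro t ht
  by_contra hc
  push_neg at hc
  have hTt : T < t := lt_of_le_of_ne ht (by rintro rfl; exact absurd hc (not_lt.2 hT))
  set S : Set ℝ := Set.Icc T t ∩ f ⁻¹' Set.Iic B with hS
  have hSclosed : IsClosed S :=
    isClosed_Icc.inter (isClosed_Iic.preimage hf.continuous)
  have hScomp : IsCompact S := isCompact_Icc.of_isClosed_subset hSclosed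
    (Set.inter_subset_left)
  have hSne : S.Nonempty := ⟨T, ⟨le_refl T, le_of_lt hTt⟩, hT⟩
  have hsmem : sSup S ∈ S := hScomp.sSup_mem hSne
  obtain ⟨⟨hTs, hst⟩, hfs'⟩ := hsmem
  set s := sSup S with hs
  have hst' : s < t := lt_of_le_of_ne hst (fun he => absurd hc (not_lt.2 (he ▸ hfs')))
  have hgt : ∀ u ∈ Set.Ioc s t, B < f u := by
    rintro u ⟨hu1, hu2⟩
    by_contra hB
    push_neg at hB
    have hmem : u ∈ S := ⟨⟨le_trans hTs (le_of_lt hu1), hu2⟩, hB⟩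
    exact absurd (le_csSup hScomp.bddAbove hmem) (not_le.2 hu1)
  have hanti : StrictAntiOn f (Set.Icc s t) := by
    apply strictAntiOn_of_deriv_neg (convex_Icc s t) (hf.continuous.continuousOn)
    intro x hx
    rw [interior_Icc] at hx
    exact hd x (le_trans hTs (le_of_lt hx.1)) (hgt x ⟨hx.1, le_of_lt hx.2⟩)
  have := hanti (Set.left_mem_Icc.2 (le_of_lt hst')) (Set.right_mem_Icc.2 (le_of_lt hst')) hst'
  exact absurd hc (not_lt.2 (le_trans (le_of_lt this) hfs'))

theorem practical_finite_time_stability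
    (V : ℝ → ℝ) (η₁ η₂ η₃ h κ : ℝ)
    (hV : Differentiable ℝ V)
    (hnn : ∀ t ≥ (0 : ℝ), 0 ≤ V t)
    (hη₁ : 0 < η₁) (hη₂ : 0 < η₂) (hη₃ : 0 < η₃)
    (hh0 : 0 < h) (hh1 : h < 1)
    (hineq : ∀ t ≥ (0 : ℝ),
      deriv V t ≤ -η₁ * V t - η₂ * (V t) ^ ((1 + h) / 2) + η₃)
    (hκ0 : 0 < κ) (hκ1 : κ < 1) :
    ∃ T ≥ (0 : ℝ), ∀ t ≥ T,
      V t ≤ min (η₃ / ((1 - κ) * η₁)) ((η₃ / ((1 - κ) * η₂)) ^ (2 / (1 + h))) := by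
  have h1κ : (0:ℝ) < 1 - κ := by linarith
  have h1h : (0:ℝ) < 1 + h := by linarith
  set B : ℝ := min (η₃ / ((1 - κ) * η₁)) ((η₃ / ((1 - κ) * η₂)) ^ (2 / (1 + h))) with hB
  set c : ℝ := κ * η₃ with hc
  have hcpos : 0 < c := mul_pos hκ0 hη₃
  have hη3div : η₃ - η₃ / (1 - κ) ≤ -c := by
    have hq : η₃ / (1 - κ) * (1 - κ) = η₃ := div_mul_cancel₀ _ (ne_of_gt h1κ)
    have hDnn : 0 ≤ η₃ / (1 - κ) := div_nonneg hη₃.le h1κ.le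
    rw [hc]
    nlinarith [sq_nonneg κ, mul_nonneg (mul_nonneg hκ0.le hκ0.le) hDnn]
  -- key: wherever V u > B (u ≥ 0), deriv V u < -c
  have hkey : ∀ u, 0 ≤ u → B < V u → deriv V u < -c := by
    intro u hu hBu
    have hVnn : 0 ≤ V u := hnn u hu
    have hrnn : 0 ≤ (V u) ^ ((1 + h) / 2) := Real.rpow_nonneg hVnn _
    have hineq' := hineq u hu
    rcases min_cases (η₃ / ((1 - κ) * η₁)) ((η₃ / ((1 - κ) * η₂)) ^ (2 / (1 + h))) with
      ⟨heq, _⟩ | ⟨heq, _⟩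
    · -- B = η₃ / ((1-κ)η₁)
      rw [hB, heq] at hBu
      have hlt : η₃ / (1 - κ) < η₁ * V u := by
        rw [div_lt_iff₀ h1κ]
        have h2 := mul_lt_mul_of_pos_right hBu (mul_pos h1κ hη₁)
        rw [div_mul_cancel₀ _ (ne_of_gt (mul_pos h1κ hη₁))] at h2
        nlinarith
      nlinarith [mul_nonneg (le_of_lt hη₂) hrnn]
    · -- B = (η₃ / ((1-κ)η₂)) ^ (2/(1+h))
      rw [hB, heq] at hBu
      have hApos : 0 < η₃ / ((1 - κ) * η₂) := div_pos hη₃ (mul_pos h1κ hη₂)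
      have hexp : 0 < (1 + h) / 2 := by positivity
      have hpow : η₃ / ((1 - κ) * η₂) < (V u) ^ ((1 + h) / 2) := by
        have h1 : ((η₃ / ((1 - κ) * η₂)) ^ (2 / (1 + h))) ^ ((1 + h) / 2)
            < (V u) ^ ((1 + h) / 2) :=
          Real.rpow_lt_rpow (Real.rpow_nonneg (le_of_lt hApos) _) hBu hexp
        have hmul : (2 / (1 + h)) * ((1 + h) / 2) = 1 := by
          field_simp
        rwa [← Real.rpow_mul (le_of_lt hApos), hmul, Real.rpow_one] at h1
      have hA' : η₃ / (1 - κ) < η₂ * (V u) ^ ((1 + h) / 2) := by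
        rw [div_lt_iff₀ h1κ]
        have h2 := mul_lt_mul_of_pos_right hpow (mul_pos h1κ hη₂)
        rw [div_mul_cancel₀ _ (ne_of_gt (mul_pos h1κ hη₂))] at h2
        nlinarith
      nlinarith [mul_nonneg (le_of_lt hη₁) hVnn]
  -- Step 1: find T₀ ≥ 0 with V T₀ ≤ B
  have hT0 : ∃ T₀ ≥ (0:ℝ), V T₀ ≤ B := by
    by_contra hcon
    push_neg at hcon
    have hd : ∀ x ∈ interior (Set.Ici (0:ℝ)),
        deriv (fun u => V u + c * u) x ≤ 0 := by
      intro x hx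
      rw [interior_Ici] at hx
      have hx0 : (0:ℝ) ≤ x := le_of_lt hx
      have hder : HasDerivAt (fun u => V u + c * u) (deriv V x + c * 1) x :=
        (hV x).hasDerivAt.add ((hasDerivAt_id x).const_mul c)
      rw [hder.deriv]
      have := hkey x hx0 (hcon x hx0)
      linarith
    have hdiff : Differentiable ℝ (fun u => V u + c * u) :=
      hV.add (differentiable_fun_id.const_mul c)
    have hanti : AntitoneOn (fun u => V u + c * u) (Set.Ici 0) :=
      antitoneOn_of_deriv_nonpos (convex_Ici 0)
        hdiff.continuous.continuousOn hdiff.differentiableOn hd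
    set t₀ : ℝ := (V 0 + 1) / c with ht₀
    have ht₀nn : 0 ≤ t₀ := div_nonneg (by linarith [hnn 0 le_rfl]) (le_of_lt hcpos)
    have hmono := hanti (Set.mem_Ici.2 le_rfl) (Set.mem_Ici.2 ht₀nn) ht₀nn
    simp only [mul_zero, add_zero] at hmono
    have hct : c * t₀ = V 0 + 1 := by
      rw [ht₀]; field_simp
    have : V t₀ ≤ -1 := by linarith
    linarith [hnn t₀ ht₀nn]
  obtain ⟨T₀, hT₀nn, hT₀B⟩ := hT0
  refine ⟨T₀, hT₀nn, ?_⟩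
  exact stay_below V hV B T₀ hT₀B (fun u hu hBu => by
    have := hkey u (le_trans hT₀nn hu) hBu
    linarith)
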